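/- (Bonnet–Myers type diameter bound) Assume #V ≥ 2 and let κ₀ > 0. If κ̄(x,y) ≥ κ₀ for all x, y ∈ V with x ≠ y, then diam(H) ≤ 2/κ₀. -/

import Mathlib

open scoped BigOperators

noncomputable section

namespace HypRicci

variable {V : Type*} [Fintype V] [DecidableEq V]

/-- A finite weighted hypergraph on vertex set `V`: a finite set of nonempty
hyperedges together with positive weights. -/
structure Hypergraph (V : Type*) [Fintype V] [DecidableEq V] : Type _ where
  E : Finset (Finset V)
  w : Finset V → ℝ
  w_pos : ∀ e ∈ E, 0 < w e
  e_nonempty : ∀ e ∈ E, e.Nonempty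

/-- Degree `d_x = ∑_{e ∋ x} w(e)`. -/
def deg (H : Hypergraph V) (x : V) : ℝ := ∑ e ∈ H.E, if x ∈ e then H.w e else 0

/-- Volume `vol(V) = ∑_x d_x`. -/
def vol (H : Hypergraph V) : ℝ := ∑ x, deg H x

/-- Weighted inner product `⟨f,g⟩ = ∑_x f(x) g(x) / d_x`. -/
def inn (H : Hypergraph V) (f g : V → ℝ) : ℝ := ∑ x, f x * g x / deg H x

/-- Norm associated to `inn`. -/
def nrm (H : Hypergraph V) (f : V → ℝ) : ℝ := Real.sqrt (inn H f f)

/-- Indicator function `δ_x`. -/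
def delta (x : V) : V → ℝ := fun z => if z = x then 1 else 0

/-- Standard (unweighted) dot product `u^⊤ v`. -/
def dot (u v : V → ℝ) : ℝ := ∑ x, u x * v x

/-- Base polytope `B_e = conv{δ_x − δ_y : x,y ∈ e}`. -/
def Bp (e : Finset V) : Set (V → ℝ) :=
  convexHull ℝ {b : V → ℝ | ∃ x ∈ e, ∃ y ∈ e, b = delta x - delta y}

/-- The multivalued hypergraph Laplacian
`L(f) = {∑_e w(e) (b_e^⊤ f) b_e : b_e ∈ argmax_{b ∈ B_e} b^⊤ f}`. -/
def Lap (H : Hypergraph V) (f : V → ℝ) : Set (V → ℝ) :=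
  { g | ∃ b : Finset V → (V → ℝ),
      (∀ e ∈ H.E, b e ∈ Bp e ∧ ∀ b' ∈ Bp e, dot b' f ≤ dot (b e) f) ∧
      g = ∑ e ∈ H.E, (H.w e * dot (b e) f) • b e }

/-- `D⁻¹ f`. -/
def Dinv (H : Hypergraph V) (f : V → ℝ) : V → ℝ := fun x => f x / deg H x

/-- Normalized Laplacian `𝓛(f) = L(D⁻¹ f)`. -/
def NL (H : Hypergraph V) (f : V → ℝ) : Set (V → ℝ) := Lap H (Dinv H f)

/-- The resolvent `J_λ = (I + λ𝓛)⁻¹`: it sends `f` to the (unique) `g` with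
`f ∈ g + λ 𝓛(g)`. -/
def Resolvent (H : Hypergraph V) (l : ℝ) (f : V → ℝ) : V → ℝ :=
  Classical.epsilon fun g => ∃ h ∈ NL H g, f = g + l • h

/-- Adjacency: `x ∼ y` iff some hyperedge contains both. -/
def Adj (H : Hypergraph V) (x y : V) : Prop := ∃ e ∈ H.E, x ∈ e ∧ y ∈ e

/-- There is a chain of length `n` of successively adjacent vertices from `x` to `y`. -/
def chainProp (H : Hypergraph V) (x y : V) (n : ℕ) : Prop :=
  ∃ z : ℕ → V, z 0 = x ∧ z n = y ∧ ∀ i < n, Adj H (z i) (z (i + 1))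

/-- Connectedness of the hypergraph. -/
def Connected (H : Hypergraph V) : Prop := ∀ x y : V, ∃ n, chainProp H x y n

/-- Graph distance (as a natural number). -/
def hdistN (H : Hypergraph V) (x y : V) : ℕ := sInf {n | chainProp H x y n}

/-- Graph distance `d(x,y)` as a real number. -/
def gdist (H : Hypergraph V) (x y : V) : ℝ := (hdistN H x y : ℝ)

/-- Diameter `diam(H) = max_{x,y} d(x,y)`. -/
def hdiam (H : Hypergraph V) : ℝ :=
  (((Finset.univ : Finset (V × V)).sup fun p => hdistN H p.1 p.2 : ℕ) : ℝ)

/-- Weighted `1`-Lipschitz functions: `⟨f, δ_x − δ_y⟩ ≤ d(x,y)` for all `x, y`. -/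
def Lip1 (H : Hypergraph V) : Set (V → ℝ) :=
  { f | ∀ x y : V, inn H f (delta x - delta y) ≤ gdist H x y }

/-- The `λ`-nonlinear Kantorovich difference. -/
def KD (H : Hypergraph V) (l : ℝ) (x y : V) : ℝ :=
  sSup { r | ∃ f ∈ Lip1 H, r = inn H (Resolvent H l f) (delta x - delta y) }

/-- `κ_λ(x,y) = 1 − KD_λ(x,y)/d(x,y)`. -/
def kappa (H : Hypergraph V) (l : ℝ) (x y : V) : ℝ := 1 - KD H l x y / gdist H x y

/-- Lower coarse Ricci curvature `κ̲(x,y) = liminf_{λ↓0} κ_λ(x,y)/λ`. -/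
def kappaLower (H : Hypergraph V) (x y : V) : EReal :=
  Filter.liminf (fun l : ℝ => ((kappa H l x y / l : ℝ) : EReal)) (nhdsWithin 0 (Set.Ioi 0))

/-- Upper coarse Ricci curvature `κ̄(x,y) = limsup_{λ↓0} κ_λ(x,y)/λ`. -/
def kappaUpper (H : Hypergraph V) (x y : V) : EReal :=
  Filter.limsup (fun l : ℝ => ((kappa H l x y / l : ℝ) : EReal)) (nhdsWithin 0 (Set.Ioi 0))

/-- Canonical restriction `𝓛⁰ f`: the unique element of minimal norm of `𝓛(f)`. -/
def L0 (H : Hypergraph V) (f : V → ℝ) : V → ℝ :=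
  Classical.epsilon fun g => g ∈ NL H f ∧ ∀ h ∈ NL H f, nrm H g ≤ nrm H h

/-- The stationary distribution `π(x) = d_x / vol(V)`. -/
def piH (H : Hypergraph V) : V → ℝ := fun x => deg H x / vol H

/-- The energy `Q(h) = (1/2) ∑_e w(e) max_{x,y ∈ e} (h(x) − h(y))²`. -/
def Qform (H : Hypergraph V) (h : V → ℝ) : ℝ :=
  (1 / 2) * ∑ e ∈ H.E, H.w e * sSup { r | ∃ x ∈ e, ∃ y ∈ e, r = (h x - h y) ^ 2 }


/-! ### Auxiliary lemmas -/

section Aux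
set_option linter.unusedSectionVars false

variable {H : Hypergraph V}

lemma dot_zero_left (v : V → ℝ) : dot (0 : V → ℝ) v = 0 := by simp [dot]

lemma dot_add_left (a b v : V → ℝ) : dot (a + b) v = dot a v + dot b v := by
  simp [dot, add_mul, Finset.sum_add_distrib]

lemma dot_smul_left (c : ℝ) (a v : V → ℝ) : dot (c • a) v = c * dot a v := by
  simp [dot, Finset.mul_sum, mul_assoc]

lemma dot_sum_left {ι : Type*} (s : Finset ι) (F : ι → V → ℝ) (v : V → ℝ) :
    dot (∑ e ∈ s, F e) v = ∑ e ∈ s, dot (F e) v := by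
  simp only [dot, Finset.sum_apply, Finset.sum_mul]
  exact Finset.sum_comm

lemma isLinearMap_dot (ψ : V → ℝ) : IsLinearMap ℝ (fun b : V → ℝ => dot b ψ) :=
  ⟨fun a b => dot_add_left a b ψ, fun c a => by simp [dot_smul_left, smul_eq_mul]⟩

lemma dot_delta_sub (a b : V) (ψ : V → ℝ) : dot (delta a - delta b) ψ = ψ a - ψ b := by
  simp only [dot, delta, Pi.sub_apply]
  have : ∀ z, ((if z = a then (1:ℝ) else 0) - (if z = b then (1:ℝ) else 0)) * ψ z
      = (if z = a then ψ z else 0) - (if z = b then ψ z else 0) := by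
    intro z; split_ifs <;> ring
  rw [Finset.sum_congr rfl fun z _ => this z, Finset.sum_sub_distrib]
  simp [Finset.sum_ite_eq']

/-- max over pairs in an edge. -/
def mx (e : Finset V) (ψ : V → ℝ) : ℝ :=
  if he : (e ×ˢ e).Nonempty then (e ×ˢ e).sup' he (fun q => ψ q.1 - ψ q.2) else 0

lemma pair_le_mx {e : Finset V} {x y : V} (hx : x ∈ e) (hy : y ∈ e) (ψ : V → ℝ) :
    ψ x - ψ y ≤ mx e ψ := by
  have hq : (x, y) ∈ e ×ˢ e := Finset.mem_product.2 ⟨hx, hy⟩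
  rw [mx, dif_pos ⟨_, hq⟩]
  exact Finset.le_sup' (fun q : V × V => ψ q.1 - ψ q.2) hq

lemma mx_nonneg {e : Finset V} (he : e.Nonempty) (ψ : V → ℝ) : 0 ≤ mx e ψ := by
  obtain ⟨x, hx⟩ := he
  have := pair_le_mx hx hx ψ
  linarith

lemma mx_le {e : Finset V} (he : e.Nonempty) {ψ : V → ℝ} {c : ℝ}
    (h : ∀ x ∈ e, ∀ y ∈ e, ψ x - ψ y ≤ c) : mx e ψ ≤ c := by
  rw [mx, dif_pos (he.product he)]
  refine Finset.sup'_le _ _ fun q hq => ?_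
  rcases Finset.mem_product.1 hq with ⟨h1, h2⟩
  exact h _ h1 _ h2

lemma exists_pair_mx {e : Finset V} (he : e.Nonempty) (ψ : V → ℝ) :
    ∃ x ∈ e, ∃ y ∈ e, mx e ψ = ψ x - ψ y := by
  obtain ⟨q, hq, hq2⟩ := Finset.exists_mem_eq_sup' (he.product he) (fun q : V × V => ψ q.1 - ψ q.2)
  rcases Finset.mem_product.1 hq with ⟨h1, h2⟩
  exact ⟨q.1, h1, q.2, h2, by rw [mx, dif_pos (he.product he), hq2]⟩

lemma dot_le_mx {e : Finset V} {b : V → ℝ} (hb : b ∈ Bp e) (ψ : V → ℝ) :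
    dot b ψ ≤ mx e ψ := by
  have hconv : Convex ℝ {b : V → ℝ | dot b ψ ≤ mx e ψ} :=
    convex_halfSpace_le (isLinearMap_dot ψ) _
  have hsub : {b : V → ℝ | ∃ x ∈ e, ∃ y ∈ e, b = delta x - delta y}
      ⊆ {b : V → ℝ | dot b ψ ≤ mx e ψ} := by
    rintro _ ⟨x, hx, y, hy, rfl⟩
    simpa [dot_delta_sub] using pair_le_mx hx hy ψ
  exact convexHull_min hsub hconv hb

lemma zero_mem_Bp {e : Finset V} (he : e.Nonempty) : (0 : V → ℝ) ∈ Bp e := by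
  obtain ⟨x, hx⟩ := he
  exact subset_convexHull ℝ _ ⟨x, hx, x, hx, by simp⟩

lemma Bp_apply_le_one {e : Finset V} {b : V → ℝ} (hb : b ∈ Bp e) (z : V) : b z ≤ 1 := by
  have hlin : IsLinearMap ℝ (fun b : V → ℝ => b z) := ⟨fun a b => rfl, fun c a => rfl⟩
  have hconv : Convex ℝ {b : V → ℝ | b z ≤ 1} := convex_halfSpace_le hlin 1
  refine convexHull_min ?_ hconv hb
  rintro _ ⟨x, hx, y, hy, rfl⟩
  simp only [Set.mem_setOf_eq, Pi.sub_apply, delta]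
  split_ifs <;> norm_num

lemma Bp_apply_neg_one {e : Finset V} {b : V → ℝ} (hb : b ∈ Bp e) (z : V) : -1 ≤ b z := by
  have hlin : IsLinearMap ℝ (fun b : V → ℝ => b z) := ⟨fun a b => rfl, fun c a => rfl⟩
  have hconv : Convex ℝ {b : V → ℝ | -1 ≤ b z} := convex_halfSpace_ge hlin (-1)
  refine convexHull_min ?_ hconv hb
  rintro _ ⟨x, hx, y, hy, rfl⟩
  simp only [Set.mem_setOf_eq, Pi.sub_apply, delta]
  split_ifs <;> norm_num

lemma Bp_abs_apply_le_one {e : Finset V} {b : V → ℝ} (hb : b ∈ Bp e) (z : V) : |b z| ≤ 1 :=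
  abs_le.2 ⟨Bp_apply_neg_one hb z, Bp_apply_le_one hb z⟩

lemma Bp_apply_eq_zero {e : Finset V} {b : V → ℝ} (hb : b ∈ Bp e) {z : V} (hz : z ∉ e) :
    b z = 0 := by
  have hlin : IsLinearMap ℝ (fun b : V → ℝ => b z) := ⟨fun a b => rfl, fun c a => rfl⟩
  have hconv : Convex ℝ {b : V → ℝ | b z = 0} := convex_hyperplane hlin 0
  refine convexHull_min ?_ hconv hb
  rintro _ ⟨x, hx, y, hy, rfl⟩
  have hzx : z ≠ x := fun h => hz (h ▸ hx)
  have hzy : z ≠ y := fun h => hz (h ▸ hy)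
  simp [delta, hzx, hzy]

lemma Bp_finite_gen (e : Finset V) :
    Set.Finite {b : V → ℝ | ∃ x ∈ e, ∃ y ∈ e, b = delta x - delta y} := by
  have : {b : V → ℝ | ∃ x ∈ e, ∃ y ∈ e, b = delta x - delta y}
      = (fun q : V × V => delta q.1 - delta q.2) '' ↑(e ×ˢ e) := by
    ext b
    simp only [Set.mem_setOf_eq, Set.mem_image, Finset.coe_product, Set.mem_prod,
      Finset.mem_coe]
    constructor
    · rintro ⟨x, hx, y, hy, rfl⟩; exact ⟨(x, y), ⟨hx, hy⟩, rfl⟩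
    · rintro ⟨⟨x, y⟩, ⟨hx, hy⟩, rfl⟩; exact ⟨x, hx, y, hy, rfl⟩
  rw [this]
  exact ((e ×ˢ e).finite_toSet.image _)

lemma Bp_compact (e : Finset V) : IsCompact (Bp e) :=
  (Bp_finite_gen e).isCompact_convexHull ℝ

end Aux
section Metric
set_option linter.unusedSectionVars false
variable {H : Hypergraph V}

lemma chainProp_zero (x : V) : chainProp H x x 0 :=
  ⟨fun _ => x, rfl, rfl, fun i hi => absurd hi (Nat.not_lt_zero i)⟩

lemma chainProp_single {e : Finset V} (he : e ∈ H.E) {x y : V} (hx : x ∈ e) (hy : y ∈ e) :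
    chainProp H x y 1 := by
  refine ⟨fun i => if i = 0 then x else y, by simp, by simp, ?_⟩
  intro i hi
  have hi0 : i = 0 := by omega
  subst hi0
  simpa using ⟨e, he, hx, hy⟩

lemma chain_concat {x u v : V} {m n : ℕ} (h1 : chainProp H x u m) (h2 : chainProp H u v n) :
    chainProp H x v (m + n) := by
  obtain ⟨z1, h10, h1m, h1a⟩ := h1
  obtain ⟨z2, h20, h2n, h2a⟩ := h2
  refine ⟨fun i => if i ≤ m then z1 i else z2 (i - m), by simp [h10], ?_, ?_⟩
  · by_cases h : m + n ≤ m
    · have hn : n = 0 := by omega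
      simp only [if_pos h]
      rw [show m + n = m by omega, h1m, ← h20, show (0:ℕ) = n from hn.symm, h2n]
    · simp only [if_neg h]
      have : m + n - m = n := by omega
      rw [this, h2n]
  · intro i hi
    by_cases h : i + 1 ≤ m
    · have : i ≤ m := by omega
      simp only [if_pos h, if_pos this]
      exact h1a i (by omega)
    · by_cases h' : i ≤ m
      · have him : i = m := by omega
        subst him
        simp only [if_pos h', if_neg h]
        rw [show i + 1 - i = 1 by omega, h1m, ← h20]
        exact h2a 0 (by omega)
      · simp only [if_neg h, if_neg h']
        have e1 : i + 1 - m = (i - m) + 1 := by omega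
        rw [e1]
        exact h2a (i - m) (by omega)

lemma hdistN_self (x : V) : hdistN H x x = 0 :=
  Nat.sInf_eq_zero.2 (Or.inl (chainProp_zero x))

lemma chainProp_hdistN (hconn : Connected H) (x y : V) : chainProp H x y (hdistN H x y) :=
  Nat.sInf_mem (hconn x y)

lemma hdistN_le_one {e : Finset V} (he : e ∈ H.E) {x y : V} (hx : x ∈ e) (hy : y ∈ e) :
    hdistN H x y ≤ 1 :=
  Nat.sInf_le (chainProp_single he hx hy)

lemma hdistN_triangle (hconn : Connected H) (x u v : V) :
    hdistN H x v ≤ hdistN H x u + hdistN H u v :=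
  Nat.sInf_le (chain_concat (chainProp_hdistN hconn x u) (chainProp_hdistN hconn u v))

lemma one_le_hdistN (hconn : Connected H) {x y : V} (hxy : x ≠ y) : 1 ≤ hdistN H x y := by
  rcases Nat.eq_zero_or_pos (hdistN H x y) with h | h
  · exfalso
    obtain ⟨z, h0, hn, _⟩ := chainProp_hdistN hconn x y
    rw [h] at hn
    exact hxy (h0 ▸ hn ▸ rfl)
  · exact h

lemma gdist_nonneg (x y : V) : 0 ≤ gdist H x y := Nat.cast_nonneg _

lemma gdist_self (x : V) : gdist H x x = 0 := by simp [gdist, hdistN_self]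

lemma one_le_gdist (hconn : Connected H) {x y : V} (hxy : x ≠ y) : 1 ≤ gdist H x y :=
  Nat.one_le_cast.2 (one_le_hdistN hconn hxy)

lemma gdist_le_one {e : Finset V} (he : e ∈ H.E) {x y : V} (hx : x ∈ e) (hy : y ∈ e) :
    gdist H x y ≤ 1 := by
  unfold gdist
  exact_mod_cast hdistN_le_one he hx hy

lemma gdist_triangle (hconn : Connected H) (x u v : V) :
    gdist H x v ≤ gdist H x u + gdist H u v := by
  unfold gdist
  exact_mod_cast hdistN_triangle hconn x u v

end Metric

section Inn
set_option linter.unusedSectionVars false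
variable {H : Hypergraph V}

lemma inn_delta_sub (H : Hypergraph V) (f : V → ℝ) (x y : V) :
    inn H f (delta x - delta y) = f x / deg H x - f y / deg H y := by
  simp only [inn, delta, Pi.sub_apply]
  have : ∀ z, f z * ((if z = x then (1:ℝ) else 0) - (if z = y then (1:ℝ) else 0)) / deg H z
      = (if z = x then f z / deg H z else 0) - (if z = y then f z / deg H z else 0) := by
    intro z; split_ifs <;> ring
  rw [Finset.sum_congr rfl fun z _ => this z, Finset.sum_sub_distrib]
  simp [Finset.sum_ite_eq']

lemma inn_add_left (H : Hypergraph V) (a b c : V → ℝ) :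
    inn H (a + b) c = inn H a c + inn H b c := by
  simp [inn, add_mul, add_div, Finset.sum_add_distrib]

lemma inn_smul_left (H : Hypergraph V) (t : ℝ) (a c : V → ℝ) :
    inn H (t • a) c = t * inn H a c := by
  simp [inn, Finset.mul_sum, mul_assoc, mul_div_assoc]

lemma inn_self_nonneg (H : Hypergraph V) (hdeg : ∀ z, 0 < deg H z) (a : V → ℝ) :
    0 ≤ inn H a a := by
  refine Finset.sum_nonneg fun z _ => div_nonneg (mul_self_nonneg _) (hdeg z).le

lemma inn_expand (H : Hypergraph V) (x y : V → ℝ) (t : ℝ) :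
    inn H (x + t • y) (x + t • y)
      = inn H x x + 2 * t * inn H x y + t ^ 2 * inn H y y := by
  simp only [inn, Pi.add_apply, Pi.smul_apply, smul_eq_mul, Finset.mul_sum,
    ← Finset.sum_add_distrib]
  refine Finset.sum_congr rfl fun z _ => ?_
  rw [show (x z + t * y z) * (x z + t * y z)
      = x z * x z + (2 * t * (x z * y z) + t ^ 2 * (y z * y z)) from by ring,
    add_div, add_div]
  ring

end Inn
section Min
set_option linter.unusedSectionVars false

/-- Energy functional. -/
def Phi (H : Hypergraph V) (g : V → ℝ) : ℝ :=
  (1 / 2) * ∑ e ∈ H.E, H.w e * (mx e (Dinv H g)) ^ 2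

/-- Objective for the resolvent problem. -/
def Fobj (H : Hypergraph V) (l : ℝ) (f : V → ℝ) (g : V → ℝ) : ℝ :=
  (1 / 2) * inn H (g - f) (g - f) + l * Phi H g

lemma continuous_sup' {ι X : Type*} [TopologicalSpace X] {s : Finset ι} (hs : s.Nonempty)
    (F : ι → X → ℝ) (hF : ∀ i, Continuous (F i)) :
    Continuous fun x => s.sup' hs fun i => F i x := by
  induction hs using Finset.Nonempty.cons_induction with
  | singleton a => simpa using hF a
  | cons a s h hs ih =>
      simp only [Finset.sup'_cons hs]
      exact (hF a).max ih

lemma continuous_mx_dinv (H : Hypergraph V) (e : Finset V) :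
    Continuous fun g => mx e (Dinv H g) := by
  by_cases he : (e ×ˢ e).Nonempty
  · simp only [mx, dif_pos he]
    refine continuous_sup' he (fun q g => Dinv H g q.1 - Dinv H g q.2) fun q => ?_
    exact ((continuous_apply q.1).div_const _).sub ((continuous_apply q.2).div_const _)
  · simp only [mx, dif_neg he]
    exact continuous_const

lemma continuous_Fobj (H : Hypergraph V) (l : ℝ) (f : V → ℝ) :
    Continuous (Fobj H l f) := by
  refine Continuous.add (continuous_const.mul ?_) (continuous_const.mul ?_)
  · simp only [inn, Pi.sub_apply]
    refine continuous_finset_sum _ fun z _ => ?_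
    exact (((continuous_apply z).sub continuous_const).mul
      ((continuous_apply z).sub continuous_const)).div_const _
  · refine continuous_const.mul (continuous_finset_sum _ fun e _ => continuous_const.mul ?_)
    exact (continuous_mx_dinv H e).pow 2

lemma Phi_nonneg (H : Hypergraph V) (g : V → ℝ) : 0 ≤ Phi H g := by
  refine mul_nonneg (by norm_num) (Finset.sum_nonneg fun e he => ?_)
  exact mul_nonneg (H.w_pos e he).le (sq_nonneg _)

lemma Fobj_nonneg (H : Hypergraph V) (hdeg : ∀ z, 0 < deg H z) {l : ℝ} (hl : 0 < l)
    (f g : V → ℝ) : 0 ≤ Fobj H l f g :=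
  add_nonneg (mul_nonneg (by norm_num) (inn_self_nonneg H hdeg _))
    (mul_nonneg hl.le (Phi_nonneg H g))

lemma vol_pos (H : Hypergraph V) [Nonempty V] (hdeg : ∀ z, 0 < deg H z) : 0 < vol H :=
  Finset.sum_pos (fun z _ => hdeg z) Finset.univ_nonempty

lemma deg_le_vol (H : Hypergraph V) (hdeg : ∀ z, 0 < deg H z) (z : V) : deg H z ≤ vol H :=
  Finset.single_le_sum (fun z _ => (hdeg z).le) (Finset.mem_univ z)

lemma exists_global_min (H : Hypergraph V) [Nonempty V] (hdeg : ∀ z, 0 < deg H z)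
    {l : ℝ} (hl : 0 < l) (f : V → ℝ) :
    ∃ g : V → ℝ, ∀ g' : V → ℝ, Fobj H l f g ≤ Fobj H l f g' := by
  classical
  set R : ℝ := Real.sqrt (2 * vol H * (Fobj H l f f + 1)) with hR
  have hR0 : 0 ≤ R := Real.sqrt_nonneg _
  have hvol : 0 < vol H := vol_pos H hdeg
  have hFf : 0 ≤ Fobj H l f f := Fobj_nonneg H hdeg hl f f
  have hR2 : R ^ 2 = 2 * vol H * (Fobj H l f f + 1) := by
    rw [hR, Real.sq_sqrt]
    positivity
  set C : Set (V → ℝ) := Set.univ.pi fun z => Set.Icc (f z - R) (f z + R) with hC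
  have hCcomp : IsCompact C := isCompact_univ_pi fun z => isCompact_Icc
  have hfC : f ∈ C := by
    intro z _
    exact ⟨by linarith, by linarith⟩
  obtain ⟨g0, hg0C, hmin⟩ := hCcomp.exists_isMinOn ⟨f, hfC⟩ (continuous_Fobj H l f).continuousOn
  refine ⟨g0, fun g' => ?_⟩
  by_cases hg' : g' ∈ C
  · exact hmin hg'
  · have : ∃ z, g' z ∉ Set.Icc (f z - R) (f z + R) := by
      by_contra hcon
      push_neg at hcon
      exact hg' fun z _ => hcon z
    obtain ⟨z, hz⟩ := this
    rw [Set.mem_Icc] at hz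
    push_neg at hz
    have habs : R < |g' z - f z| := by
      rcases lt_or_ge (g' z) (f z - R) with h | h
      · rw [abs_sub_comm, abs_of_nonneg (by linarith)]
        linarith
      · have := hz h
        rw [abs_of_nonneg (by linarith)]
        linarith
    have hsq : R ^ 2 < (g' z - f z) ^ 2 := by
      calc R ^ 2 < |g' z - f z| ^ 2 := by
            exact pow_lt_pow_left₀ habs hR0 (by norm_num)
        _ = (g' z - f z) ^ 2 := sq_abs _
    -- lower bound Fobj at g'
    have h1 : (g' z - f z) ^ 2 / deg H z ≤ inn H (g' - f) (g' - f) := by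
      have : (g' z - f z) ^ 2 / deg H z = (g' - f) z * (g' - f) z / deg H z := by
        simp [Pi.sub_apply]; ring
      rw [this]
      exact Finset.single_le_sum
        (fun w _ => div_nonneg (mul_self_nonneg _) (hdeg w).le) (Finset.mem_univ z)
    have h2 : (g' z - f z) ^ 2 / vol H ≤ (g' z - f z) ^ 2 / deg H z :=
      div_le_div_of_nonneg_left (sq_nonneg _) (hdeg z) (deg_le_vol H hdeg z)
    have h3 : R ^ 2 / vol H < (g' z - f z) ^ 2 / vol H := by gcongr
    have hRv : R ^ 2 / vol H = 2 * (Fobj H l f f + 1) := by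
      rw [hR2]; field_simp
    have hlow : (1 / 2) * inn H (g' - f) (g' - f) ≤ Fobj H l f g' := by
      unfold Fobj; linarith [mul_nonneg hl.le (Phi_nonneg H g')]
    have hchain : R ^ 2 / vol H < inn H (g' - f) (g' - f) := h3.trans_le (h2.trans h1)
    have hmin' := (isMinOn_iff.1 hmin) f hfC
    linarith

end Min
section Existence
set_option linter.unusedSectionVars false
set_option maxHeartbeats 1600000

lemma resolvent_exists (H : Hypergraph V) [Nonempty V] (hdeg : ∀ z, 0 < deg H z)
    {l : ℝ} (hl : 0 < l) (f : V → ℝ) :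
    ∃ g : V → ℝ, ∃ h ∈ NL H g, f = g + l • h := by
  classical
  by_cases hE0 : H.E = ∅
  · refine ⟨f, 0, ⟨fun _ => 0, ?_, ?_⟩, by simp⟩
    · intro e he; rw [hE0] at he; exact absurd he (Finset.notMem_empty e)
    · rw [hE0]; simp
  obtain ⟨g0, hg0⟩ := exists_global_min H hdeg hl f
  set u : V → ℝ := Dinv H g0 with hu
  set Am : Finset V → Set (V → ℝ) :=
    fun e => if e ∈ H.E then {b | b ∈ Bp e ∧ mx e u ≤ dot b u} else {0} with hAm
  set T : (Finset V → V → ℝ) → (V → ℝ) :=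
    fun b => ∑ e ∈ H.E, (l * (H.w e * mx e u)) • b e with hT
  set K : Set (V → ℝ) := T '' (Set.univ.pi Am) with hK
  have hdotcont : Continuous fun b : V → ℝ => dot b u := by
    unfold dot
    exact continuous_finset_sum _ fun z _ => (continuous_apply z).mul continuous_const
  have hAmCC : ∀ e, IsCompact (Am e) ∧ Convex ℝ (Am e) := by
    intro e
    by_cases he : e ∈ H.E
    · rw [hAm]; simp only [if_pos he]
      constructor
      · have h2 : IsClosed {b : V → ℝ | mx e u ≤ dot b u} :=
          isClosed_le continuous_const hdotcont
        exact (Bp_compact e).inter_right h2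
      · exact (convex_convexHull ℝ _).inter (convex_halfSpace_ge (isLinearMap_dot u) _)
    · rw [hAm]; simp only [if_neg he]
      exact ⟨isCompact_singleton, convex_singleton 0⟩
  have hTcont : Continuous T := by
    rw [hT]
    exact continuous_finset_sum _ fun e _ => (continuous_apply e).const_smul (l * (H.w e * mx e u))
  have hKcomp : IsCompact K := (isCompact_univ_pi fun e => (hAmCC e).1).image hTcont
  have hKconv : Convex ℝ K := by
    rintro y1 ⟨b1, hb1, rfl⟩ y2 ⟨b2, hb2, rfl⟩ aa bb ha hb hab
    refine ⟨fun e => aa • b1 e + bb • b2 e, ?_, ?_⟩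
    · intro e _
      exact (hAmCC e).2 (hb1 e (Set.mem_univ e)) (hb2 e (Set.mem_univ e)) ha hb hab
    · simp only [hT, Finset.smul_sum, ← Finset.sum_add_distrib]
      refine Finset.sum_congr rfl fun e _ => ?_
      rw [smul_add, smul_comm aa, smul_comm bb]
  -- main claim : f - g0 lies in K
  have hpK : f - g0 ∈ K := by
    by_contra hnot
    obtain ⟨φ, u₀, hφp, hφK⟩ :=
      geometric_hahn_banach_point_closed hKconv hKcomp.isClosed hnot
    set v : V → ℝ := fun z => φ (Pi.single z 1) with hv
    have hφeq : ∀ y : V → ℝ, φ y = dot y v := by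
      intro y
      conv_lhs => rw [pi_eq_sum_univ y]
      rw [map_sum]
      unfold dot
      refine Finset.sum_congr rfl fun z _ => ?_
      rw [map_smul, smul_eq_mul]
      congr 1
      rw [hv]
      congr 1
      funext j
      by_cases hj : z = j <;> simp [Pi.single_apply, hj, eq_comm]
    -- choose per-edge maximizing pairs, maximizing also v q.2 - v q.1
    have hsel : ∀ e : Finset V, ∃ p : V × V, e ∈ H.E →
        ((p.1 ∈ e ∧ p.2 ∈ e ∧ mx e u = u p.1 - u p.2) ∧
         ∀ p' : V × V, p'.1 ∈ e → p'.2 ∈ e → mx e u = u p'.1 - u p'.2 →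
           v p'.2 - v p'.1 ≤ v p.2 - v p.1) := by
      intro e
      by_cases he : e ∈ H.E
      · have hne : e.Nonempty := H.e_nonempty e he
        set P : Finset (V × V) :=
          (e ×ˢ e).filter (fun p => mx e u = u p.1 - u p.2) with hP
        have hPne : P.Nonempty := by
          obtain ⟨x, hx, y, hy, hxy⟩ := exists_pair_mx hne u
          exact ⟨(x, y), Finset.mem_filter.2 ⟨Finset.mem_product.2 ⟨hx, hy⟩, hxy⟩⟩
        obtain ⟨p, hpP, hps⟩ :=
          Finset.exists_mem_eq_sup' hPne (fun p : V × V => v p.2 - v p.1)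
        rcases Finset.mem_filter.1 hpP with ⟨hpprod, hpmax⟩
        rcases Finset.mem_product.1 hpprod with ⟨hp1, hp2⟩
        refine ⟨p, fun _ => ⟨⟨hp1, hp2, hpmax⟩, ?_⟩⟩
        intro p' h1 h2 h3
        rw [← hps]
        exact Finset.le_sup' (fun p : V × V => v p.2 - v p.1)
          (Finset.mem_filter.2 ⟨Finset.mem_product.2 ⟨h1, h2⟩, h3⟩)
      · exact ⟨(Classical.arbitrary V, Classical.arbitrary V), fun h => absurd h he⟩
    choose q hq using hsel
    set a : Finset V → ℝ := fun e => v (q e).2 - v (q e).1 with ha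
    set y0 : V → ℝ :=
      ∑ e ∈ H.E, (l * (H.w e * mx e u)) • (delta (q e).1 - delta (q e).2) with hy0
    have hy0K : y0 ∈ K := by
      refine ⟨fun e => if e ∈ H.E then delta (q e).1 - delta (q e).2 else 0, ?_, ?_⟩
      · intro e _
        by_cases he : e ∈ H.E
        · simp only [hAm, if_pos he]
          obtain ⟨⟨h1, h2, h3⟩, _⟩ := hq e he
          refine ⟨subset_convexHull ℝ _ ⟨(q e).1, h1, (q e).2, h2, rfl⟩, ?_⟩
          rw [dot_delta_sub]
          exact le_of_eq h3
        · simp only [hAm, if_neg he]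
          rfl
      · simp only [hT]
        refine Finset.sum_congr rfl fun e he => ?_
        rw [if_pos he]
    set S : ℝ := ∑ e ∈ H.E, H.w e * (mx e u * a e) with hS
    have hφy0 : φ y0 = -(l * S) := by
      rw [hφeq, hy0, dot_sum_left, hS, Finset.mul_sum, ← Finset.sum_neg_distrib]
      refine Finset.sum_congr rfl fun e he => ?_
      rw [dot_smul_left, dot_delta_sub]
      simp only [ha]
      ring
    have hεpos : 0 < u₀ - dot (f - g0) v := by
      have := hφeq (f - g0)
      linarith [hφp, this.symm.le, this.le]
    set ε₀ : ℝ := u₀ - dot (f - g0) v with hε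
    have hsep : dot (f - g0) v + l * S ≤ -ε₀ := by
      have h1 := hφK y0 hy0K
      rw [hφy0] at h1
      simp only [hε]
      linarith
    set dv : V → ℝ := fun z => -(deg H z * v z) with hdv
    have hDinv : ∀ t : ℝ, Dinv H (g0 + t • dv) = fun z => u z - t * v z := by
      intro t; funext z
      have hz := (hdeg z).ne'
      simp only [Dinv, Pi.add_apply, Pi.smul_apply, hdv, smul_eq_mul, hu]
      field_simp
      ring
    have hinn_dv : inn H (g0 - f) dv = dot (f - g0) v := by
      unfold inn dot
      refine Finset.sum_congr rfl fun z _ => ?_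
      have hz := (hdeg z).ne'
      simp only [Pi.sub_apply, hdv]
      field_simp
      ring
    set N : ℝ := inn H dv dv with hN
    set B2 : ℝ := (1/2) * ∑ e ∈ H.E, H.w e * (a e)^2 with hB2
    set Bc : ℝ := (1/2) * N + l * B2 with hBc
    have hNnn : 0 ≤ N := inn_self_nonneg H hdeg dv
    have hB2nn : 0 ≤ B2 := by
      rw [hB2]
      refine mul_nonneg (by norm_num) (Finset.sum_nonneg fun e he => ?_)
      exact mul_nonneg (H.w_pos e he).le (sq_nonneg _)
    have hBcnn : 0 ≤ Bc := by
      rw [hBc]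
      have := mul_nonneg hl.le hB2nn
      linarith
    -- eventual bound on the edge maxima
    have hev1 : ∀ᶠ t in nhdsWithin (0:ℝ) (Set.Ioi 0),
        ∀ e ∈ H.E, mx e (fun z => u z - t * v z) ≤ mx e u + t * a e := by
      rw [Filter.eventually_all_finset]
      intro e he
      have hne : e.Nonempty := H.e_nonempty e he
      have hpair : ∀ p ∈ e ×ˢ e, ∀ᶠ t in nhdsWithin (0:ℝ) (Set.Ioi 0),
          (u p.1 - t * v p.1) - (u p.2 - t * v p.2) ≤ mx e u + t * a e := by
        intro p hp
        rcases Finset.mem_product.1 hp with ⟨hp1, hp2⟩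
        by_cases hcase : mx e u = u p.1 - u p.2
        · have hβ : v p.2 - v p.1 ≤ a e := (hq e he).2 p hp1 hp2 hcase
          filter_upwards [self_mem_nhdsWithin] with t ht
          have ht0 : (0:ℝ) ≤ t := (Set.mem_Ioi.1 ht).le
          nlinarith [mul_le_mul_of_nonneg_left hβ ht0]
        · have hlt : u p.1 - u p.2 < mx e u :=
            lt_of_le_of_ne (pair_le_mx hp1 hp2 u) (fun hh => hcase hh.symm)
          have hcont : Filter.Tendsto
              (fun t : ℝ => (u p.1 - t * v p.1) - (u p.2 - t * v p.2) - t * a e)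
              (nhdsWithin (0:ℝ) (Set.Ioi 0)) (nhds (u p.1 - u p.2)) := by
            have hc : Continuous fun t : ℝ =>
                (u p.1 - t * v p.1) - (u p.2 - t * v p.2) - t * a e := by fun_prop
            have h0 : Filter.Tendsto
                (fun t : ℝ => (u p.1 - t * v p.1) - (u p.2 - t * v p.2) - t * a e)
                (nhds 0) (nhds (u p.1 - u p.2)) := by
              simpa using hc.tendsto 0
            exact h0.mono_left nhdsWithin_le_nhds
          filter_upwards [hcont.eventually_lt_const hlt] with t ht
          linarith
      have hA := (Filter.eventually_all_finset (e ×ˢ e)).2 hpair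
      filter_upwards [hA] with t hta
      exact mx_le hne fun x hx y hy => hta (x, y) (Finset.mem_product.2 ⟨hx, hy⟩)
    have hev2 : ∀ᶠ t in nhdsWithin (0:ℝ) (Set.Ioi 0), (0:ℝ) < t := by
      filter_upwards [self_mem_nhdsWithin] with t ht
      exact Set.mem_Ioi.1 ht
    have hev3 : ∀ᶠ t in nhdsWithin (0:ℝ) (Set.Ioi 0), t * Bc < ε₀ := by
      have hc : Filter.Tendsto (fun t : ℝ => t * Bc)
          (nhdsWithin (0:ℝ) (Set.Ioi 0)) (nhds 0) := by
        have h0 := (continuous_id.mul (continuous_const (y := Bc))).tendsto (0:ℝ)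
        have h0' : Filter.Tendsto (fun t : ℝ => t * Bc) (nhds 0) (nhds 0) := by simp at h0; exact h0
        exact h0'.mono_left nhdsWithin_le_nhds
      exact hc.eventually_lt_const hεpos
    obtain ⟨t, htmx, ht0, htB⟩ := (hev1.and (hev2.and hev3)).exists
    -- expansion of the objective
    have h1 : inn H ((g0 + t • dv) - f) ((g0 + t • dv) - f)
        = inn H (g0 - f) (g0 - f) + 2 * t * dot (f - g0) v + t ^ 2 * N := by
      have hrw : (g0 + t • dv) - f = (g0 - f) + t • dv := by abel
      rw [hrw, inn_expand, hinn_dv, hN]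
    have h2 : Phi H (g0 + t • dv) ≤ Phi H g0 + t * S + t ^ 2 * B2 := by
      have heq : Phi H g0 + t * S + t ^ 2 * B2
          = (1/2) * ∑ e ∈ H.E, H.w e * (mx e u + t * a e) ^ 2 := by
        simp only [Phi, ← hu, hS, hB2, Finset.mul_sum, ← Finset.sum_add_distrib]
        refine Finset.sum_congr rfl fun e he => by ring
      rw [heq]
      have hPhit : Phi H (g0 + t • dv)
          = (1/2) * ∑ e ∈ H.E, H.w e * (mx e (fun z => u z - t * v z)) ^ 2 := by
        simp only [Phi, hDinv t]
      rw [hPhit]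
      refine mul_le_mul_of_nonneg_left (Finset.sum_le_sum fun e he => ?_) (by norm_num)
      refine mul_le_mul_of_nonneg_left ?_ (H.w_pos e he).le
      have h0 : 0 ≤ mx e (fun z => u z - t * v z) := mx_nonneg (H.e_nonempty e he) _
      have hb := htmx e he
      nlinarith
    have h3 : Fobj H l f (g0 + t • dv)
        ≤ Fobj H l f g0 + t * (dot (f - g0) v + l * S) + t ^ 2 * Bc := by
      have hPhB := mul_le_mul_of_nonneg_left h2 hl.le
      unfold Fobj
      rw [h1, hBc]
      ring_nf
      ring_nf at hPhB
      nlinarith [hPhB]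
    have hmin := hg0 (g0 + t • dv)
    have hts := mul_le_mul_of_nonneg_left hsep ht0.le
    have h4 : t * ε₀ ≤ t * (t * Bc) := by nlinarith [hmin, h3, hts]
    have h5 : t * (t * Bc) < t * ε₀ := mul_lt_mul_of_pos_left htB ht0
    linarith
  -- conclude: extract the selection and build the Laplacian element
  obtain ⟨bsel, hbsel, hTeq⟩ := hpK
  have hbBp : ∀ e ∈ H.E, bsel e ∈ Bp e ∧ mx e u ≤ dot (bsel e) u := by
    intro e he
    have hmem := hbsel e (Set.mem_univ e)
    simp only [hAm, if_pos he] at hmem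
    exact hmem
  have hdotc : ∀ e ∈ H.E, dot (bsel e) u = mx e u := fun e he =>
    le_antisymm (dot_le_mx (hbBp e he).1 u) (hbBp e he).2
  refine ⟨g0, ∑ e ∈ H.E, (H.w e * dot (bsel e) (Dinv H g0)) • bsel e,
    ⟨bsel, fun e he => ⟨(hbBp e he).1, fun b' hb' => ?_⟩, rfl⟩, ?_⟩
  · rw [← hu, hdotc e he]
    exact dot_le_mx hb' u
  · have hls : l • ∑ e ∈ H.E, (H.w e * dot (bsel e) (Dinv H g0)) • bsel e = f - g0 := by
      rw [← hTeq, hT, Finset.smul_sum]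
      refine Finset.sum_congr rfl fun e he => ?_
      rw [smul_smul, ← hu, hdotc e he]
    rw [hls]
    abel

end Existence
section Estimate
set_option linter.unusedSectionVars false
set_option maxHeartbeats 1600000

lemma resolvent_close (H : Hypergraph V) [Nonempty V] (hdeg : ∀ z, 0 < deg H z)
    {l : ℝ} (hl : 0 < l) (hl4 : l ≤ 1/4) {f : V → ℝ} (hf : f ∈ Lip1 H) (x y : V) :
    |inn H (Resolvent H l f) (delta x - delta y) - inn H f (delta x - delta y)|
      ≤ 2 * l / (1 - 2 * l) := by
  classical
  have h2l : (0:ℝ) < 1 - 2 * l := by linarith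
  have hspec : ∃ h ∈ NL H (Resolvent H l f), f = Resolvent H l f + l • h :=
    Classical.epsilon_spec (resolvent_exists H hdeg hl f)
  set g : V → ℝ := Resolvent H l f with hg
  obtain ⟨h, hh, hfe⟩ := hspec
  set u : V → ℝ := Dinv H g with hu
  obtain ⟨b, hbcond, hbsum⟩ := hh
  by_cases hE0 : H.E = ∅
  · have hh0 : h = 0 := by rw [hbsum, hE0]; simp
    rw [hfe, hh0]
    simp only [smul_zero, add_zero, sub_self, abs_zero]
    positivity
  have hEne : H.E.Nonempty := Finset.nonempty_iff_ne_empty.2 hE0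
  have hc0 : ∀ e ∈ H.E, 0 ≤ dot (b e) u := by
    intro e he
    have h0 := (hbcond e he).2 0 (zero_mem_Bp (H.e_nonempty e he))
    rwa [dot_zero_left] at h0
  set C : ℝ := H.E.sup' hEne (fun e => dot (b e) u) with hC
  have hCle : ∀ e ∈ H.E, dot (b e) u ≤ C := fun e he =>
    Finset.le_sup' (fun e => dot (b e) u) he
  have hC0 : 0 ≤ C := by
    obtain ⟨e, he⟩ := hEne
    exact le_trans (hc0 e he) (hCle e he)
  have hhz : ∀ z, |h z| ≤ C * deg H z := by
    intro z
    have hzz : h z = ∑ e ∈ H.E, (H.w e * dot (b e) u) * b e z := by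
      rw [hbsum, Finset.sum_apply]
      exact Finset.sum_congr rfl fun e _ => by simp [hu]
    rw [hzz]
    calc |∑ e ∈ H.E, (H.w e * dot (b e) u) * b e z|
        ≤ ∑ e ∈ H.E, |(H.w e * dot (b e) u) * b e z| :=
          Finset.abs_sum_le_sum_abs _ _
      _ ≤ ∑ e ∈ H.E, (if z ∈ e then H.w e * C else 0) := by
          refine Finset.sum_le_sum fun e he => ?_
          by_cases hz : z ∈ e
          · rw [if_pos hz, abs_mul,
              abs_of_nonneg (mul_nonneg (H.w_pos e he).le (hc0 e he))]
            have hb1 : |b e z| ≤ 1 := Bp_abs_apply_le_one (hbcond e he).1 z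
            have hb0 : (0:ℝ) ≤ |b e z| := abs_nonneg _
            nlinarith [mul_le_mul_of_nonneg_left hb1 (mul_nonneg (H.w_pos e he).le (hc0 e he)),
              mul_le_mul_of_nonneg_left (hCle e he) (H.w_pos e he).le]
          · rw [if_neg hz, Bp_apply_eq_zero (hbcond e he).1 hz]
            simp
      _ = C * deg H z := by
          rw [deg, Finset.mul_sum]
          exact Finset.sum_congr rfl fun e he => by split_ifs <;> ring
  have hinnh : ∀ p q2 : V, |inn H h (delta p - delta q2)| ≤ 2 * C := by
    intro p q2
    rw [inn_delta_sub]
    have h1 : |h p / deg H p| ≤ C := by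
      rw [abs_div, abs_of_pos (hdeg p), div_le_iff₀ (hdeg p)]
      exact hhz p
    have h2 : |h q2 / deg H q2| ≤ C := by
      rw [abs_div, abs_of_pos (hdeg q2), div_le_iff₀ (hdeg q2)]
      exact hhz q2
    have h3 := abs_add_le (h p / deg H p) (-(h q2 / deg H q2))
    rw [abs_neg] at h3
    rw [show h p / deg H p - h q2 / deg H q2
        = h p / deg H p + -(h q2 / deg H q2) from by ring]
    linarith
  have hce : ∀ e ∈ H.E, dot (b e) u ≤ 1 + 2 * l * C := by
    intro e he
    have hne := H.e_nonempty e he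
    refine le_trans (dot_le_mx (hbcond e he).1 u) (mx_le hne ?_)
    intro p hp q2 hq2
    have hinng : u p - u q2 = inn H g (delta p - delta q2) := by
      rw [inn_delta_sub, hu]
      rfl
    have hfg : inn H f (delta p - delta q2)
        = inn H g (delta p - delta q2) + l * inn H h (delta p - delta q2) := by
      rw [hfe, inn_add_left, inn_smul_left]
    have hfl := hf p q2
    have hgd : gdist H p q2 ≤ 1 := gdist_le_one he hp hq2
    have habs := (abs_le.1 (hinnh p q2)).1
    rw [hinng]
    nlinarith [hl.le]
  have hC2 : C ≤ 1 / (1 - 2 * l) := by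
    obtain ⟨e, he, hce'⟩ := Finset.exists_mem_eq_sup' hEne (fun e => dot (b e) u)
    have hC' : C = dot (b e) u := by rw [hC, hce']
    have := hce e he
    rw [le_div_iff₀ h2l]
    nlinarith
  have hdiff : inn H g (delta x - delta y) - inn H f (delta x - delta y)
      = -(l * inn H h (delta x - delta y)) := by
    rw [hfe, inn_add_left, inn_smul_left]
    ring
  rw [hdiff, abs_neg, abs_mul, abs_of_pos hl]
  have hxy := hinnh x y
  have hfin : l * |inn H h (delta x - delta y)| ≤ l * (2 * C) :=
    mul_le_mul_of_nonneg_left hxy hl.le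
  have hlast : l * (2 * C) ≤ 2 * l / (1 - 2 * l) := by
    rw [div_eq_mul_inv]
    have hinv : (1 - 2*l)⁻¹ = 1 / (1 - 2*l) := by rw [one_div]
    nlinarith [hC2, hl.le, mul_le_mul_of_nonneg_left hC2 (by positivity : (0:ℝ) ≤ 2 * l)]
  linarith

end Estimate
section Final
set_option linter.unusedSectionVars false
set_option maxHeartbeats 1600000

lemma kappa_le_bound (H : Hypergraph V) [Nonempty V] (hconn : Connected H)
    (hdeg : ∀ z, 0 < deg H z) {x y : V} (hxy : x ≠ y) {l : ℝ} (hl : 0 < l)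
    (hl4 : l ≤ 1/4) :
    kappa H l x y ≤ (2 * l / (1 - 2 * l)) / gdist H x y := by
  classical
  have h2l : (0:ℝ) < 1 - 2 * l := by linarith
  have hd1 : (1:ℝ) ≤ gdist H x y := one_le_gdist hconn hxy
  have hd0 : (0:ℝ) < gdist H x y := lt_of_lt_of_le one_pos hd1
  have hA0 : (0:ℝ) ≤ 2 * l / (1 - 2 * l) := by positivity
  set A : ℝ := 2 * l / (1 - 2 * l) with hA
  set s : Set ℝ :=
    {r | ∃ f ∈ Lip1 H, r = inn H (Resolvent H l f) (delta x - delta y)} with hs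
  have hbdd : BddAbove s := by
    refine ⟨gdist H x y + A, ?_⟩
    rintro r ⟨f, hfL, rfl⟩
    have h1 := (abs_le.1 (resolvent_close H hdeg hl hl4 hfL x y)).2
    have h2 := hfL x y
    rw [hA]
    linarith
  have hKDl : gdist H x y - A ≤ KD H l x y := by
    set f0 : V → ℝ := fun z => -(deg H z * gdist H x z) with hf0
    have hval : ∀ p : V, f0 p / deg H p = -(gdist H x p) := by
      intro p
      have hp := (hdeg p).ne'
      simp only [hf0]
      field_simp
    have hf0L : f0 ∈ Lip1 H := by
      intro p q2
      rw [inn_delta_sub, hval p, hval q2]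
      have := gdist_triangle hconn x p q2
      linarith
    have hmem' : inn H (Resolvent H l f0) (delta x - delta y) ∈ s := ⟨f0, hf0L, rfl⟩
    have hle := le_csSup hbdd hmem'
    have h1 := (abs_le.1 (resolvent_close H hdeg hl hl4 hf0L x y)).1
    have hval2 : inn H f0 (delta x - delta y) = gdist H x y := by
      rw [inn_delta_sub, hval x, hval y, gdist_self]
      ring
    have hKD : KD H l x y = sSup s := rfl
    rw [hKD, hA]
    rw [hval2] at h1
    linarith
  rw [kappa]
  have hmon : (gdist H x y - A) / gdist H x y ≤ KD H l x y / gdist H x y := by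
    gcongr
  have hsplit : (gdist H x y - A) / gdist H x y = 1 - A / gdist H x y := by
    field_simp
  linarith [hmon, hsplit.symm.le, hsplit.le]

lemma gdist_le_bound (H : Hypergraph V) [Nonempty V] (hconn : Connected H)
    (hdeg : ∀ z, 0 < deg H z) {x y : V} (hxy : x ≠ y) {k0 : ℝ} (hk0 : 0 < k0)
    (hcurv : (k0 : EReal) ≤ kappaUpper H x y) :
    gdist H x y ≤ 2 / k0 := by
  classical
  set D : ℝ := gdist H x y with hD
  have hd1 : (1:ℝ) ≤ D := one_le_gdist hconn hxy
  have hd0 : (0:ℝ) < D := lt_of_lt_of_le one_pos hd1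
  have hk2 : k0 ≤ 2 / D := by
    refine le_of_forall_pos_le_add fun ε hε => ?_
    have hδ : (0:ℝ) < min (1/4) (ε/8) := by positivity
    have hev : ∀ᶠ t in nhdsWithin (0:ℝ) (Set.Ioi 0),
        ((kappa H t x y / t : ℝ) : EReal) ≤ ((2 / D + ε : ℝ) : EReal) := by
      filter_upwards [Ioc_mem_nhdsGT_of_mem
        (Set.mem_Ico.2 ⟨le_refl (0:ℝ), hδ⟩)] with t ht
      rcases Set.mem_Ioc.1 ht with ⟨ht0, htδ⟩
      have ht4 : t ≤ 1/4 := le_trans htδ (min_le_left _ _)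
      have htε : t ≤ ε/8 := le_trans htδ (min_le_right _ _)
      have h2t : (0:ℝ) < 1 - 2*t := by linarith
      refine EReal.coe_le_coe_iff.2 ?_
      have hb := kappa_le_bound H hconn hdeg hxy ht0 ht4
      have hb2 : kappa H t x y / t ≤ ((2 * t / (1 - 2*t)) / D) / t := by
        gcongr
      have hb3 : ((2 * t / (1 - 2*t)) / D) / t = 2 / ((1 - 2*t) * D) := by
        field_simp
      have hstep : 2 / ((1 - 2*t) * D) ≤ 2 / D + ε := by
        have hAD : (0:ℝ) < (1 - 2*t) * D := by positivity
        rw [div_add' _ _ _ hd0.ne', div_le_div_iff₀ hAD hd0]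
        have hin : (0:ℝ) ≤ ε * (D * (1 - 2*t)) - 4*t := by
          nlinarith [mul_nonneg (sub_nonneg.2 hd1) (by linarith : (0:ℝ) ≤ 1 - 2*t),
            mul_nonneg hε.le (mul_nonneg (by linarith : (0:ℝ) ≤ D - 1)
              (by linarith : (0:ℝ) ≤ 1 - 2*t))]
        have hkey : (0:ℝ) ≤ D * (ε * (D * (1 - 2*t)) - 4*t) := mul_nonneg hd0.le hin
        nlinarith [hkey]
      calc kappa H t x y / t ≤ ((2 * t / (1 - 2*t)) / D) / t := hb2
        _ = 2 / ((1 - 2*t) * D) := hb3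
        _ ≤ 2 / D + ε := hstep
    have hup : kappaUpper H x y ≤ ((2 / D + ε : ℝ) : EReal) :=
      Filter.limsup_le_of_le (by isBoundedDefault) hev
    exact EReal.coe_le_coe_iff.1 (le_trans hcurv hup)
  have hkd : k0 * D ≤ 2 := (le_div_iff₀ hd0).1 hk2
  rw [le_div_iff₀ hk0]
  nlinarith

end Final
/-- Bonnet–Myers: if `κ̄(x,y) ≥ κ₀ > 0` for all `x ≠ y`, then
`diam(H) ≤ 2/κ₀`. -/
theorem stmt18 [Nonempty V] (H : Hypergraph V) (hconn : Connected H)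
    (hdeg : ∀ x : V, 0 < deg H x) (hV : 2 ≤ Fintype.card V)
    (k0 : ℝ) (hk0 : 0 < k0)
    (hcurv : ∀ x y : V, x ≠ y → (k0 : EReal) ≤ kappaUpper H x y) :
    hdiam H ≤ 2 / k0 := by
  classical
  have huniv : (Finset.univ : Finset (V × V)).Nonempty := Finset.univ_nonempty
  obtain ⟨p, hp, hps⟩ :=
    Finset.exists_mem_eq_sup Finset.univ huniv (fun p : V × V => hdistN H p.1 p.2)
  unfold hdiam
  rw [hps]
  by_cases hpq : p.1 = p.2
  · rw [hpq, hdistN_self]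
    simp only [Nat.cast_zero]
    positivity
  · exact gdist_le_bound H hconn hdeg hpq hk0 (hcurv p.1 p.2 hpq)

end HypRicci
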